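/- arXiv:2504.17244 — 2 statements merged into one kernel-verified Lean document; each statement's English description precedes it below -/
import Mathlib

section
/- For the service rate region S_i(n,k), the maximal achievable demand λ_j^max = max{λ_j : λ ∈ S_i(n,k)} satisfies: λ_j^max = 1 + (n−1)/k if j ≤ i and n ≥ k+1; λ_j^max = 1 if j ≤ i and n = k; and λ_j^max = n/k if j > i. -/
open Matrix

/-- `R ⊆ [n]` is a recovery set for object `j` under generator matrix `G`:
the standard basis vector `e_j` lies in the span of the columns of `G` indexed by `R`,
and minimally so. -/
def IsRecoverySet {F : Type*} [Field F] {k n : ℕ} (G : Matrix (Fin k) (Fin n) F)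
    (j : Fin k) (R : Finset (Fin n)) : Prop :=
  (Pi.single j 1 : Fin k → F) ∈ Submodule.span F (Gᵀ '' (R : Set (Fin n))) ∧
    ∀ S : Finset (Fin n), S ⊂ R →
      (Pi.single j 1 : Fin k → F) ∉ Submodule.span F (Gᵀ '' (S : Set (Fin n)))

/-- A valid allocation of request rates `lam` to recovery sets: nonnegative weights
`w j R` supported on recovery sets, summing to `lam j` for each object `j`, and
loading each server `l` by at most its unit capacity. -/
def IsValidAllocation {F : Type*} [Field F] {k n : ℕ} (G : Matrix (Fin k) (Fin n) F)
    (lam : Fin k → ℝ) (w : Fin k → Finset (Fin n) → ℝ) : Prop :=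
  (∀ j R, 0 ≤ w j R) ∧
  (∀ j R, ¬ IsRecoverySet G j R → w j R = 0) ∧
  (∀ j, ∑ R : Finset (Fin n), w j R = lam j) ∧
  (∀ l : Fin n, ∑ j : Fin k, ∑ R ∈ Finset.univ.filter (fun R : Finset (Fin n) => l ∈ R),
      w j R ≤ 1)

/-- The service rate region of `G`. -/
def ServiceRegion {F : Type*} [Field F] {k n : ℕ} (G : Matrix (Fin k) (Fin n) F) :
    Set (Fin k → ℝ) :=
  {lam | (∀ j, 0 ≤ lam j) ∧ ∃ w, IsValidAllocation G lam w}

/-- `Gmat M i` = the `k × n` matrix formed by the `i` leftmost (systematic) columns of `M`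
followed by the `n - i` rightmost (parity) columns of `M`. -/
def Gmat {F : Type*} [Field F] {k n : ℕ} (M : Matrix (Fin k) (Fin (k + n)) F) (i : ℕ) :
    Matrix (Fin k) (Fin n) F :=
  Matrix.of fun r l =>
    if (l : ℕ) < i then M r ⟨(l : ℕ), by have := l.isLt; omega⟩
    else M r ⟨k + (l : ℕ), by have := l.isLt; omega⟩

open Finset

/-! ### Linear algebra -/

section LA
variable {F : Type*} [Field F] {k n : ℕ} (M : Matrix (Fin k) (Fin (k + n)) F) (i : ℕ)

def colIdx (i : ℕ) (l : Fin n) : Fin (k + n) :=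
  if (l : ℕ) < i then ⟨(l : ℕ), by have := l.isLt; omega⟩
  else ⟨k + (l : ℕ), by have := l.isLt; omega⟩

lemma Gt_eq (l : Fin n) : (Gmat M i)ᵀ l = Mᵀ (colIdx i l) := by
  ext r
  simp only [transpose_apply, Gmat, Matrix.of_apply, colIdx]
  split <;> rfl

lemma colIdx_inj : Function.Injective (colIdx (k := k) (n := n) i) := by
  intro a b hab
  have h := congrArg Fin.val hab
  unfold colIdx at h
  have ha := a.isLt; have hb := b.isLt
  apply Fin.ext
  split at h <;> split at h <;> simp at h <;> omega

lemma colIdx_eq_castAdd {j : Fin k} {l : Fin n} (h : colIdx (k := k) i l = Fin.castAdd n j) :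
    (l : ℕ) < i ∧ (l : ℕ) = (j : ℕ) := by
  have hv := congrArg Fin.val h
  unfold colIdx at hv
  have hj := j.isLt
  split at hv <;> simp [Fin.castAdd] at hv <;> omega

end LA

section LA2
variable {F : Type*} [Field F] {k n : ℕ} {M : Matrix (Fin k) (Fin (k + n)) F} {i : ℕ}
variable (hMDS : ∀ S : Finset (Fin (k + n)), S.card = k →
      LinearIndependent F (fun l : S => Mᵀ (l : Fin (k + n))))

include hMDS in
lemma li_subset (T : Finset (Fin (k + n))) (hT : T.card ≤ k) :
    LinearIndependent F (fun l : T => Mᵀ (l : Fin (k + n))) := by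
  obtain ⟨T', hTT', hT'⟩ := Finset.exists_superset_card_eq hT (by simp)
  have h := hMDS T' hT'
  have hsub : (T : Set (Fin (k + n))) ⊆ (T' : Set (Fin (k + n))) := by
    exact_mod_cast hTT'
  exact h.comp (Set.inclusion hsub) (Set.inclusion_injective hsub)

variable (hsys : ∀ j : Fin k, ∀ r : Fin k, M r (Fin.castAdd n j) = if r = j then (1 : F) else 0)

include hsys in
lemma single_eq_col (j : Fin k) : (Pi.single j 1 : Fin k → F) = Mᵀ (Fin.castAdd n j) := by
  ext r
  rw [transpose_apply, hsys j r, Pi.single_apply]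

include hMDS hsys in
lemma not_mem_span (S : Finset (Fin n)) (hS : S.card < k) (j : Fin k)
    (hj : ∀ l ∈ S, colIdx (k := k) i l ≠ Fin.castAdd n j) :
    (Pi.single j 1 : Fin k → F) ∉
      Submodule.span F ((Gmat M i)ᵀ '' (S : Set (Fin n))) := by
  classical
  set T : Finset (Fin (k + n)) := insert (Fin.castAdd n j) (S.image (colIdx i)) with hTdef
  have hTcard : T.card ≤ k := by
    have h1 : (S.image (colIdx i)).card ≤ S.card :=
      Finset.card_image_le (f := colIdx (k := k) i)
    have h2 := Finset.card_insert_le (Fin.castAdd n j) (S.image (colIdx i))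
    rw [hTdef]
    omega
  have hli := li_subset hMDS T hTcard
  have hmemT : Fin.castAdd n j ∈ T := Finset.mem_insert_self _ _
  have hnot : Mᵀ (Fin.castAdd n j) ∉ Submodule.span F
      ((fun l : T => Mᵀ (l : Fin (k + n))) ''
        {x : T | (x : Fin (k + n)) ∈ S.image (colIdx i)}) := by
    have hx : (⟨Fin.castAdd n j, hmemT⟩ : T) ∉
        {x : T | (x : Fin (k + n)) ∈ S.image (colIdx i)} := by
      intro hmem
      simp only [Set.mem_setOf_eq, Finset.mem_image] at hmem
      obtain ⟨l, hl, hcol⟩ := hmem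
      exact hj l hl hcol
    exact hli.notMem_span_image hx
  rw [single_eq_col hsys]
  intro hmem
  apply hnot
  refine Submodule.span_mono ?_ hmem
  rintro v ⟨l, hl, rfl⟩
  refine ⟨⟨colIdx i l, Finset.mem_insert_of_mem (Finset.mem_image_of_mem _ (Finset.mem_coe.mp hl))⟩, ?_, ?_⟩
  · show colIdx i l ∈ S.image (colIdx i)
    exact Finset.mem_image_of_mem _ (Finset.mem_coe.mp hl)
  · exact (Gt_eq M i l).symm

include hMDS in
lemma span_top (S : Finset (Fin n)) (hS : S.card = k) :
    Submodule.span F ((Gmat M i)ᵀ '' (S : Set (Fin n))) = ⊤ := by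
  classical
  have himg : (S.image (colIdx (k := k) i)).card = k := by
    rw [Finset.card_image_of_injective _ (colIdx_inj i), hS]
  have hli' := hMDS (S.image (colIdx (k := k) i)) himg
  have hli : LinearIndependent F (fun l : S => (Gmat M i)ᵀ (l : Fin n)) := by
    have hcomp := hli'.comp
      (fun x : S => (⟨colIdx i x, Finset.mem_image_of_mem _ x.2⟩ : (S.image (colIdx (k := k) i))))
      (fun a b hab => by
        apply Subtype.ext
        exact colIdx_inj i (congrArg Subtype.val hab))
    convert hcomp using 1
    funext l
    exact Gt_eq M i l
  have hrange : Set.range (fun l : S => (Gmat M i)ᵀ (l : Fin n))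
      = (Gmat M i)ᵀ '' (S : Set (Fin n)) := by
    ext v; constructor
    · rintro ⟨l, rfl⟩; exact ⟨l, l.2, rfl⟩
    · rintro ⟨l, hl, rfl⟩; exact ⟨⟨l, hl⟩, rfl⟩
  apply Submodule.eq_top_of_finrank_eq
  rw [← hrange, finrank_span_eq_card hli, Module.finrank_pi]
  simp [hS]

end LA2

/-! ### Recovery sets -/

/-- the server index corresponding to object j -/
def srv {k n : ℕ} (hkn : k ≤ n) (j : Fin k) : Fin n := ⟨(j : ℕ), lt_of_lt_of_le j.isLt hkn⟩

section REC
variable {F : Type*} [Field F] {k n : ℕ} {M : Matrix (Fin k) (Fin (k + n)) F} {i : ℕ}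
  (hkn : k ≤ n)
variable (hMDS : ∀ S : Finset (Fin (k + n)), S.card = k →
      LinearIndependent F (fun l : S => Mᵀ (l : Fin (k + n))))
variable (hsys : ∀ j : Fin k, ∀ r : Fin k, M r (Fin.castAdd n j) = if r = j then (1 : F) else 0)

lemma colIdx_srv {j : Fin k} (hj : (j : ℕ) < i) :
    colIdx (k := k) i (srv hkn j) = Fin.castAdd n j := by
  apply Fin.ext
  unfold colIdx srv
  simp [hj]

include hsys in
lemma col_srv_eq {j : Fin k} (hj : (j : ℕ) < i) :
    (Gmat M i)ᵀ (srv hkn j) = (Pi.single j 1 : Fin k → F) := by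
  rw [Gt_eq, single_eq_col hsys, colIdx_srv hkn hj]

lemma single_ne_zero' (j : Fin k) : (Pi.single j 1 : Fin k → F) ≠ 0 := by
  intro h
  have := congrFun h j
  simp at this

include hsys in
lemma rec_singleton {j : Fin k} (hj : (j : ℕ) < i) :
    IsRecoverySet (Gmat M i) j {srv hkn j} := by
  constructor
  · apply Submodule.subset_span
    exact ⟨srv hkn j, by simp, col_srv_eq hkn hsys hj⟩
  · intro S hS
    have : S = ∅ := by
      rw [Finset.ssubset_singleton_iff] at hS
      exact hS
    subst this
    simp only [Finset.coe_empty, Set.image_empty, Submodule.span_empty]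
    intro h
    have hsub : (Gmat M i)ᵀ '' (∅ : Set (Fin n)) ⊆ ∅ := by
      rintro _ ⟨x, hx, _⟩
      exact (hx : False).elim
    have h2 := Submodule.span_mono hsub h
    rw [Submodule.span_empty, Submodule.mem_bot] at h2
    exact single_ne_zero' j h2

include hMDS hsys in
lemma rec_k {j : Fin k} (S : Finset (Fin n)) (hS : S.card = k)
    (hcond : ∀ l ∈ S, colIdx (k := k) i l ≠ Fin.castAdd n j) :
    IsRecoverySet (Gmat M i) j S := by
  constructor
  · rw [span_top hMDS S hS]; trivial
  · intro S' hS'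
    exact not_mem_span hMDS hsys S'
      (lt_of_lt_of_le (Finset.card_lt_card hS') hS.le) j
      (fun l hl => hcond l (hS'.1 hl))

include hMDS hsys in
lemma rec_char {j : Fin k} {R : Finset (Fin n)} (h : IsRecoverySet (Gmat M i) j R) :
    ((j : ℕ) < i ∧ R = {srv hkn j}) ∨
      (k ≤ R.card ∧ ∀ l ∈ R, colIdx (k := k) i l ≠ Fin.castAdd n j) := by
  classical
  by_cases hmem : ∃ l ∈ R, colIdx (k := k) i l = Fin.castAdd n j
  · obtain ⟨l, hl, hcol⟩ := hmem
    obtain ⟨hli, hlj⟩ := colIdx_eq_castAdd i hcol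
    have hji : (j : ℕ) < i := by omega
    have hlsrv : l = srv hkn j := Fin.ext (by simpa [srv] using hlj)
    left
    refine ⟨hji, ?_⟩
    by_contra hne
    have hss : ({l} : Finset (Fin n)) ⊂ R := by
      rw [Finset.ssubset_iff_subset_ne]
      exact ⟨Finset.singleton_subset_iff.mpr hl, by rw [hlsrv]; exact Ne.symm hne⟩
    apply h.2 {l} hss
    apply Submodule.subset_span
    exact ⟨l, by simp, by rw [hlsrv]; exact col_srv_eq hkn hsys hji⟩
  · push_neg at hmem
    right
    refine ⟨?_, hmem⟩
    by_contra hcard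
    exact not_mem_span hMDS hsys R (by omega) j hmem h.1

end REC

/-! ### Counting -/

section COUNT
variable {α : Type*} [Fintype α] [DecidableEq α]

omit [DecidableEq α] in
lemma countA (s : Finset α) (m : ℕ) (P : Finset α → Prop) [DecidablePred P]
    (hP : ∀ R, P R ↔ R ⊆ s ∧ R.card = m) :
    ((univ : Finset (Finset α)).filter P).card = s.card.choose m := by
  have : (univ : Finset (Finset α)).filter P = s.powersetCard m := by
    ext R
    simp [Finset.mem_powersetCard, hP]
  rw [this, Finset.card_powersetCard]

lemma countB (s : Finset α) (l : α) (hl : l ∈ s) (m : ℕ) (P : Finset α → Prop) [DecidablePred P]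
    (hP : ∀ R, P R ↔ R ⊆ s ∧ R.card = m + 1 ∧ l ∈ R) :
    ((univ : Finset (Finset α)).filter P).card = (s.card - 1).choose m := by
  have hcard : ((univ : Finset (Finset α)).filter P).card
      = ((s.erase l).powersetCard m).card := by
    apply Finset.card_bij' (fun R _ => R.erase l) (fun T _ => insert l T)
    · intro R hR
      rw [Finset.mem_filter] at hR
      exact Finset.insert_erase ((hP R).mp hR.2).2.2
    · intro T hT
      rw [Finset.mem_powersetCard] at hT
      have hlT : l ∉ T := fun h => (Finset.mem_erase.mp (hT.1 h)).1 rfl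
      exact Finset.erase_insert hlT
    · intro R hR
      rw [Finset.mem_filter] at hR
      obtain ⟨hsub, hc, hlR⟩ := (hP R).mp hR.2
      rw [Finset.mem_powersetCard]
      exact ⟨Finset.erase_subset_erase l hsub, by rw [Finset.card_erase_of_mem hlR, hc]; rfl⟩
    · intro T hT
      rw [Finset.mem_powersetCard] at hT
      obtain ⟨hsub, hc⟩ := hT
      have hlT : l ∉ T := fun h => (Finset.mem_erase.mp (hsub h)).1 rfl
      rw [Finset.mem_filter]
      refine ⟨Finset.mem_univ _, (hP _).mpr ⟨?_, ?_, Finset.mem_insert_self _ _⟩⟩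
      · exact Finset.insert_subset hl ((hsub.trans (Finset.erase_subset l s)))
      · rw [Finset.card_insert_of_notMem hlT, hc]
  rw [hcard, Finset.card_powersetCard, Finset.card_erase_of_mem hl]

end COUNT

lemma choose_identity {n k : ℕ} (hk : 1 ≤ k) (hkn : k ≤ n) :
    n * (n - 1).choose (k - 1) = n.choose k * k := by
  have := Nat.add_one_mul_choose_eq (n - 1) (k - 1)
  have h1 : n - 1 + 1 = n := by omega
  have h2 : k - 1 + 1 = k := by omega
  rw [h1, h2] at this
  exact this

/-! ### Double counting bound -/

lemma double_count {k n : ℕ} (w : Fin k → Finset (Fin n) → ℝ)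
    (hw : ∀ j R, 0 ≤ w j R)
    (hcap : ∀ l : Fin n, ∑ j : Fin k, ∑ R ∈ univ.filter (fun R : Finset (Fin n) => l ∈ R),
      w j R ≤ 1)
    (j : Fin k) (s : Finset (Fin n)) (A : Finset (Finset (Fin n)))
    (hA : ∀ R ∈ A, w j R ≠ 0 → R ⊆ s) :
    ∑ R ∈ A, w j R * R.card ≤ (s.card : ℝ) := by
  have step1 : ∑ R ∈ A, w j R * R.card
      ≤ ∑ R ∈ A, ∑ l ∈ s, (if l ∈ R then w j R else 0) := by
    apply Finset.sum_le_sum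
    intro R hR
    by_cases hz : w j R = 0
    · simp [hz]
    · have hRs : R ⊆ s := hA R hR hz
      have : ∑ l ∈ s, (if l ∈ R then w j R else 0) = (s.filter (fun l => l ∈ R)).card • w j R := by
        rw [Finset.sum_ite, Finset.sum_const, Finset.sum_const_zero, add_zero]
      rw [this, Finset.filter_mem_eq_inter, Finset.inter_eq_right.mpr hRs, nsmul_eq_mul]
      rw [mul_comm]
  have step2 : ∑ R ∈ A, ∑ l ∈ s, (if l ∈ R then w j R else 0)
      = ∑ l ∈ s, ∑ R ∈ A, (if l ∈ R then w j R else 0) := Finset.sum_comm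
  have step3 : ∀ l : Fin n, ∑ R ∈ A, (if l ∈ R then w j R else 0) ≤ 1 := by
    intro l
    have e1 : ∑ R ∈ A, (if l ∈ R then w j R else 0)
        = ∑ R ∈ A.filter (fun R => l ∈ R), w j R := by
      rw [Finset.sum_ite, Finset.sum_const_zero, add_zero]
    rw [e1]
    have e2 : ∑ R ∈ A.filter (fun R => l ∈ R), w j R
        ≤ ∑ R ∈ univ.filter (fun R : Finset (Fin n) => l ∈ R), w j R := by
      apply Finset.sum_le_sum_of_subset_of_nonneg
      · exact Finset.filter_subset_filter _ (Finset.subset_univ A)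
      · intro R _ _; exact hw j R
    refine e2.trans (le_trans ?_ (hcap l))
    exact Finset.single_le_sum
      (f := fun j' => ∑ R ∈ univ.filter (fun R : Finset (Fin n) => l ∈ R), w j' R)
      (fun j' _ => Finset.sum_nonneg fun R _ => hw j' R) (Finset.mem_univ j)
  calc ∑ R ∈ A, w j R * R.card ≤ ∑ l ∈ s, ∑ R ∈ A, (if l ∈ R then w j R else 0) :=
        step1.trans (le_of_eq step2)
    _ ≤ ∑ l ∈ s, (1 : ℝ) := Finset.sum_le_sum fun l _ => step3 l
    _ = s.card := by simp

/-! ### Single-object allocations -/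

lemma alloc_of_single {F : Type*} [Field F] {k n : ℕ} (G : Matrix (Fin k) (Fin n) F)
    (j : Fin k) (v : Finset (Fin n) → ℝ) (t : ℝ)
    (hv0 : ∀ R, 0 ≤ v R)
    (hvsupp : ∀ R, ¬ IsRecoverySet G j R → v R = 0)
    (hvsum : ∑ R : Finset (Fin n), v R = t)
    (hvcap : ∀ l : Fin n, ∑ R ∈ univ.filter (fun R : Finset (Fin n) => l ∈ R), v R ≤ 1) :
    ∃ lam ∈ ServiceRegion G, lam j = t := by
  classical
  refine ⟨fun j' => if j' = j then t else 0, ⟨?_, ?_⟩, by simp⟩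
  · intro j'
    by_cases h : j' = j
    · simp only [h, if_pos rfl]
      rw [← hvsum]
      exact Finset.sum_nonneg fun R _ => hv0 R
    · simp [h]
  · refine ⟨fun j' R => if j' = j then v R else 0, fun j' R => ?_, fun j' R hr => ?_, fun j' => ?_, fun l => ?_⟩
    · by_cases h : j' = j <;> simp [h, hv0 R]
    · by_cases h : j' = j
      · subst h; simp [hvsupp R hr]
      · simp [h]
    · by_cases h : j' = j <;> simp [h, hvsum]
    · have e : ∀ j' : Fin k, ∑ R ∈ univ.filter (fun R : Finset (Fin n) => l ∈ R),
          (if j' = j then v R else 0)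
          = if j' = j then ∑ R ∈ univ.filter (fun R : Finset (Fin n) => l ∈ R), v R else 0 := by
        intro j'
        by_cases h : j' = j <;> simp [h]
      rw [Finset.sum_congr rfl fun j' _ => e j', Finset.sum_ite_eq' univ j]
      simpa using hvcap l

/-! ### Achievability -/

section ACH
variable {F : Type*} [Field F] {k n : ℕ} {M : Matrix (Fin k) (Fin (k + n)) F} {i : ℕ}
  (hk : 2 ≤ k) (hkn : k ≤ n)
variable (hMDS : ∀ S : Finset (Fin (k + n)), S.card = k →
      LinearIndependent F (fun l : S => Mᵀ (l : Fin (k + n))))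
variable (hsys : ∀ j : Fin k, ∀ r : Fin k, M r (Fin.castAdd n j) = if r = j then (1 : F) else 0)

include hkn hsys in
lemma ach_singleton {j : Fin k} (hji : (j : ℕ) < i) :
    ∃ lam ∈ ServiceRegion (Gmat M i), lam j = (1 : ℝ) := by
  classical
  apply alloc_of_single (Gmat M i) j (fun R => if R = {srv hkn j} then 1 else 0)
  · intro R; positivity
  · intro R hnr
    by_cases h : R = {srv hkn j}
    · exact absurd (h ▸ rec_singleton hkn hsys hji) hnr
    · simp [h]
  · rw [Finset.sum_ite_eq' univ ({srv hkn j} : Finset (Fin n)) (fun _ => (1:ℝ))]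
    simp
  · intro l
    rw [Finset.sum_ite_eq' _ ({srv hkn j} : Finset (Fin n)) (fun _ => (1:ℝ))]
    split <;> norm_num

include hk hkn hMDS hsys in
lemma ach_frac {j : Fin k} (hji : ¬ (j : ℕ) < i) :
    ∃ lam ∈ ServiceRegion (Gmat M i), lam j = (n : ℝ) / (k : ℝ) := by
  classical
  set c : ℝ := ((n : ℝ) / (k : ℝ)) / (n.choose k : ℝ) with hc
  have hk0 : (0 : ℝ) < (k : ℝ) := by
    have : 0 < k := by omega
    exact_mod_cast this
  have hch0 : (0 : ℝ) < (n.choose k : ℝ) := by exact_mod_cast Nat.choose_pos hkn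
  have hc0 : 0 ≤ c := by positivity
  have hcond : ∀ (R : Finset (Fin n)), ∀ l ∈ R, colIdx (k := k) i l ≠ Fin.castAdd n j := by
    intro R l _ heq
    obtain ⟨h1, h2⟩ := colIdx_eq_castAdd i heq
    omega
  apply alloc_of_single (Gmat M i) j (fun R => if R.card = k then c else 0)
  · intro R; positivity
  · intro R hnr
    by_cases h : R.card = k
    · exact absurd (rec_k hMDS hsys R h (hcond R)) hnr
    · simp [h]
  · rw [Finset.sum_ite, Finset.sum_const, Finset.sum_const_zero, add_zero, nsmul_eq_mul]
    have hcount : (univ.filter (fun R : Finset (Fin n) => R.card = k)).card = n.choose k := by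
      have := countA (univ : Finset (Fin n)) k (fun R => R.card = k)
        (fun R => by simp)
      simpa using this
    rw [hcount, hc]
    field_simp
  · intro l
    rw [Finset.sum_ite, Finset.sum_const, Finset.sum_const_zero, add_zero, nsmul_eq_mul,
      Finset.filter_filter]
    have hcount : (univ.filter (fun R : Finset (Fin n) => l ∈ R ∧ R.card = k)).card
        = (n - 1).choose (k - 1) := by
      have := countB (univ : Finset (Fin n)) l (Finset.mem_univ l) (k - 1)
        (fun R => l ∈ R ∧ R.card = k)
        (fun R => by
          constructor
          · rintro ⟨h1, h2⟩
            exact ⟨Finset.subset_univ R, by omega, h1⟩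
          · rintro ⟨_, h2, h3⟩
            exact ⟨h3, by omega⟩)
      simpa using this
    rw [hcount, hc]
    have hid : ((n - 1).choose (k - 1) : ℝ) * (n : ℝ) = (k : ℝ) * (n.choose k : ℝ) := by
      have h := choose_identity (by omega : 1 ≤ k) hkn
      have h2 : ((n : ℝ)) * ((n - 1).choose (k - 1) : ℝ) = (n.choose k : ℝ) * (k : ℝ) := by
        exact_mod_cast congrArg (Nat.cast : ℕ → ℝ) h
      linarith [h2, mul_comm ((n - 1).choose (k - 1) : ℝ) (n : ℝ),
        mul_comm (k : ℝ) (n.choose k : ℝ)]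
    refine le_of_eq ?_
    field_simp
    linear_combination hid

include hk hkn hMDS hsys in
lemma ach_two {j : Fin k} (hji : (j : ℕ) < i) (hlt : k < n) :
    ∃ lam ∈ ServiceRegion (Gmat M i), lam j = 1 + ((n : ℝ) - 1) / (k : ℝ) := by
  classical
  have hk1n : k ≤ n - 1 := by omega
  set jn : Fin n := srv hkn j with hjn
  have hC0 : (0 : ℝ) < ((n - 1).choose k : ℝ) := by exact_mod_cast Nat.choose_pos hk1n
  have hCne : ((n - 1).choose k : ℝ) ≠ 0 := ne_of_gt hC0
  have hk0 : (0 : ℝ) < (k : ℝ) := by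
    have : 0 < k := by omega
    exact_mod_cast this
  have hkne : (k : ℝ) ≠ 0 := ne_of_gt hk0
  have hn1 : ((n - 1 : ℕ) : ℝ) = (n : ℝ) - 1 := by
    have h1 : 1 ≤ n := by omega
    push_cast [h1]
    ring
  set c : ℝ := (((n : ℝ) - 1) / (k : ℝ)) / ((n - 1).choose k : ℝ) with hc
  have hn1' : (0:ℝ) ≤ (n : ℝ) - 1 := by
    have h1 : (1:ℝ) ≤ (n:ℝ) := by exact_mod_cast (by omega : 1 ≤ n)
    linarith
  have hc0 : 0 ≤ c := by positivity
  apply alloc_of_single (Gmat M i) j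
    (fun R => (if R = {jn} then 1 else 0) + (if R.card = k ∧ jn ∉ R then c else 0))
  · intro R
    apply add_nonneg
    · positivity
    · split <;> simp [hc0]
  · intro R hnr
    by_cases h1 : R = {jn}
    · exact absurd (h1 ▸ rec_singleton hkn hsys hji) hnr
    · by_cases h2 : R.card = k ∧ jn ∉ R
      · refine absurd (rec_k hMDS hsys R h2.1 ?_) hnr
        intro l hl heq
        obtain ⟨hli, hlj⟩ := colIdx_eq_castAdd i heq
        have : l = jn := Fin.ext (by simpa [hjn, srv] using hlj)
        exact h2.2 (this ▸ hl)
      · simp [h1, h2]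
  · rw [Finset.sum_add_distrib]
    rw [Finset.sum_ite_eq' univ ({jn} : Finset (Fin n)) (fun _ => (1:ℝ))]
    rw [Finset.sum_ite, Finset.sum_const, Finset.sum_const_zero, add_zero, nsmul_eq_mul]
    have hcount : (univ.filter (fun R : Finset (Fin n) => R.card = k ∧ jn ∉ R)).card
        = (n - 1).choose k := by
      have := countA (univ.erase jn) k (fun R : Finset (Fin n) => R.card = k ∧ jn ∉ R)
        (fun R => by
          rw [Finset.subset_erase]
          constructor
          · rintro ⟨h1, h2⟩; exact ⟨⟨Finset.subset_univ R, h2⟩, h1⟩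
          · rintro ⟨⟨_, h2⟩, h1⟩; exact ⟨h1, h2⟩)
      rw [this, Finset.card_erase_of_mem (Finset.mem_univ jn)]
      simp
    rw [hcount, hc]
    simp only [Finset.mem_univ, if_true]
    field_simp
  · intro l
    rw [Finset.sum_add_distrib]
    rw [Finset.sum_ite_eq' _ ({jn} : Finset (Fin n)) (fun _ => (1:ℝ))]
    rw [Finset.sum_ite, Finset.sum_const, Finset.sum_const_zero, add_zero, nsmul_eq_mul,
      Finset.filter_filter]
    by_cases hl : l = jn
    · have h1 : ({jn} : Finset (Fin n)) ∈ univ.filter (fun R : Finset (Fin n) => l ∈ R) := by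
        simp [hl]
      rw [if_pos h1]
      have h2 : (univ.filter (fun R : Finset (Fin n) => l ∈ R ∧ (R.card = k ∧ jn ∉ R))).card = 0 := by
        rw [Finset.card_eq_zero, Finset.filter_eq_empty_iff]
        rintro R _ ⟨hmem, _, hnot⟩
        exact hnot (hl ▸ hmem)
      rw [h2]
      norm_num
    · have h1 : ({jn} : Finset (Fin n)) ∉ univ.filter (fun R : Finset (Fin n) => l ∈ R) := by
        simp [hl]
      rw [if_neg h1]
      have hlmem : l ∈ univ.erase jn := Finset.mem_erase.mpr ⟨hl, Finset.mem_univ l⟩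
      have hcount : (univ.filter (fun R : Finset (Fin n) => l ∈ R ∧ (R.card = k ∧ jn ∉ R))).card
          = (n - 2).choose (k - 1) := by
        have := countB (univ.erase jn) l hlmem (k - 1)
          (fun R : Finset (Fin n) => l ∈ R ∧ (R.card = k ∧ jn ∉ R))
          (fun R => by
            rw [Finset.subset_erase]
            constructor
            · rintro ⟨h1, h2, h3⟩
              exact ⟨⟨Finset.subset_univ R, h3⟩, by omega, h1⟩
            · rintro ⟨⟨_, h3⟩, h2, h1⟩
              exact ⟨h1, by omega, h3⟩)
        rw [this, Finset.card_erase_of_mem (Finset.mem_univ jn)]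
        have huc : (univ : Finset (Fin n)).card = n := by simp
        rw [huc]
        have h9 : n - 1 - 1 = n - 2 := by omega
        rw [h9]
      rw [hcount, hc]
      have hid : ((n - 2).choose (k - 1) : ℝ) * ((n : ℝ) - 1)
          = (k : ℝ) * ((n - 1).choose k : ℝ) := by
        have hnat := choose_identity (by omega : 1 ≤ k) hk1n
        have h2 : n - 1 - 1 = n - 2 := by omega
        rw [h2] at hnat
        have h3 : (((n - 1 : ℕ)) : ℝ) * ((n - 2).choose (k - 1) : ℝ)
            = ((n - 1).choose k : ℝ) * (k : ℝ) := by
          exact_mod_cast congrArg (Nat.cast : ℕ → ℝ) hnat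
        rw [hn1] at h3
        linarith [h3]
      rw [zero_add]
      refine le_of_eq ?_
      field_simp
      linear_combination hid

end ACH

/-! ### Upper bound -/

section UB
variable {F : Type*} [Field F] {k n : ℕ} {M : Matrix (Fin k) (Fin (k + n)) F} {i : ℕ}
  (hk : 2 ≤ k) (hkn : k ≤ n)
variable (hMDS : ∀ S : Finset (Fin (k + n)), S.card = k →
      LinearIndependent F (fun l : S => Mᵀ (l : Fin (k + n))))
variable (hsys : ∀ j : Fin k, ∀ r : Fin k, M r (Fin.castAdd n j) = if r = j then (1 : F) else 0)

include hk hkn hMDS hsys in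
lemma upper_bound {j : Fin k} (lam : Fin k → ℝ) (hlam : lam ∈ ServiceRegion (Gmat M i)) :
    lam j ≤ (if (j : ℕ) < i then (if n = k then (1 : ℝ) else 1 + ((n : ℝ) - 1) / (k : ℝ))
       else (n : ℝ) / (k : ℝ)) := by
  classical
  obtain ⟨hpos, w, hw0, hsupp, hsum, hcap⟩ := hlam
  have hk0 : (0 : ℝ) < (k : ℝ) := by
    have : 0 < k := by omega
    exact_mod_cast this
  by_cases hji : (j : ℕ) < i
  · rw [if_pos hji]
    set jn : Fin n := srv hkn j with hjn
    have hmain : w j {jn} + ∑ R ∈ univ.erase ({jn} : Finset (Fin n)), w j R = lam j := by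
      rw [Finset.add_sum_erase univ (w j) (Finset.mem_univ ({jn} : Finset (Fin n)))]
      exact hsum j
    have hb1 : w j {jn} ≤ 1 := by
      have h1 : w j {jn} ≤ ∑ R ∈ univ.filter (fun R : Finset (Fin n) => jn ∈ R), w j R := by
        apply Finset.single_le_sum (fun R _ => hw0 j R)
        simp
      have h2 : ∑ R ∈ univ.filter (fun R : Finset (Fin n) => jn ∈ R), w j R
          ≤ ∑ j' : Fin k, ∑ R ∈ univ.filter (fun R : Finset (Fin n) => jn ∈ R), w j' R := by
        exact Finset.single_le_sum
          (f := fun j' => ∑ R ∈ univ.filter (fun R : Finset (Fin n) => jn ∈ R), w j' R)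
          (fun j' _ => Finset.sum_nonneg fun R _ => hw0 j' R) (Finset.mem_univ j)
      exact h1.trans (h2.trans (hcap jn))
    have hRprop : ∀ R ∈ univ.erase ({jn} : Finset (Fin n)), w j R ≠ 0 →
        k ≤ R.card ∧ R ⊆ univ.erase jn := by
      intro R hR hz
      have hrec : IsRecoverySet (Gmat M i) j R := by
        by_contra h
        exact hz (hsupp j R h)
      rcases rec_char hkn hMDS hsys hrec with ⟨_, h2⟩ | ⟨h1, h2⟩
      · exact absurd h2 (Finset.mem_erase.mp hR).1
      · refine ⟨h1, ?_⟩
        rw [Finset.subset_erase]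
        refine ⟨Finset.subset_univ R, fun hmem => ?_⟩
        exact h2 jn hmem (colIdx_srv hkn hji)
    by_cases hnk : n = k
    · rw [if_pos hnk]
      have hz : ∀ R ∈ univ.erase ({jn} : Finset (Fin n)), w j R = 0 := by
        intro R hR
        by_contra hz
        obtain ⟨h1, h2⟩ := hRprop R hR hz
        have h3 : R.card ≤ (univ.erase jn).card := Finset.card_le_card h2
        rw [Finset.card_erase_of_mem (Finset.mem_univ jn)] at h3
        have h4 : (univ : Finset (Fin n)).card = n := by simp
        omega
      rw [← hmain, Finset.sum_eq_zero hz, add_zero]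
      exact hb1
    · rw [if_neg hnk]
      have hdc := double_count w hw0 hcap j (univ.erase jn) (univ.erase ({jn} : Finset (Fin n)))
        (fun R hR hz => (hRprop R hR hz).2)
      have hcard : ((univ.erase jn).card : ℝ) = (n : ℝ) - 1 := by
        rw [Finset.card_erase_of_mem (Finset.mem_univ jn)]
        have h4 : (univ : Finset (Fin n)).card = n := by simp
        rw [h4]
        have : 1 ≤ n := by omega
        push_cast [this]
        ring
      have h1 : (k : ℝ) * ∑ R ∈ univ.erase ({jn} : Finset (Fin n)), w j R
          ≤ ∑ R ∈ univ.erase ({jn} : Finset (Fin n)), w j R * R.card := by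
        rw [Finset.mul_sum]
        apply Finset.sum_le_sum
        intro R hR
        by_cases hz : w j R = 0
        · simp [hz]
        · rw [mul_comm]
          apply mul_le_mul_of_nonneg_left _ (hw0 j R)
          exact_mod_cast (hRprop R hR hz).1
      have h2 : ∑ R ∈ univ.erase ({jn} : Finset (Fin n)), w j R ≤ ((n : ℝ) - 1) / (k : ℝ) := by
        rw [le_div_iff₀ hk0]
        rw [hcard] at hdc
        linarith
      linarith
  · rw [if_neg hji]
    have hterm : ∀ R : Finset (Fin n), (k : ℝ) * w j R ≤ w j R * R.card := by
      intro R
      by_cases hz : w j R = 0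
      · simp [hz]
      · have hrec : IsRecoverySet (Gmat M i) j R := by
          by_contra h
          exact hz (hsupp j R h)
        rcases rec_char hkn hMDS hsys hrec with ⟨h1, _⟩ | ⟨h1, _⟩
        · exact absurd h1 hji
        · rw [mul_comm]
          apply mul_le_mul_of_nonneg_left _ (hw0 j R)
          exact_mod_cast h1
    have hdc := double_count w hw0 hcap j univ univ (fun R _ _ => Finset.subset_univ R)
    have hcard : ((univ : Finset (Fin n)).card : ℝ) = (n : ℝ) := by simp
    have h1 : (k : ℝ) * lam j ≤ (n : ℝ) := by
      rw [← hsum j, Finset.mul_sum]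
      calc ∑ R : Finset (Fin n), (k : ℝ) * w j R
          ≤ ∑ R : Finset (Fin n), w j R * R.card := Finset.sum_le_sum fun R _ => hterm R
        _ ≤ ((univ : Finset (Fin n)).card : ℝ) := hdc
        _ = (n : ℝ) := hcard
    rw [le_div_iff₀ hk0]
    linarith

end UB

theorem maximal_achievable_demand
    {F : Type*} [Field F] [Fintype F] {k n : ℕ} (hk : 2 ≤ k) (hkn : k ≤ n)
    (hq : k + n + 1 ≤ Fintype.card F)
    (M : Matrix (Fin k) (Fin (k + n)) F)
    (hsys : ∀ j : Fin k, ∀ r : Fin k, M r (Fin.castAdd n j) = if r = j then (1 : F) else 0)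
    (hMDS : ∀ S : Finset (Fin (k + n)), S.card = k →
      LinearIndependent F (fun l : S => Mᵀ (l : Fin (k + n))))
    (i : ℕ) (hik : i ≤ k) (j : Fin k) :
    IsGreatest {x : ℝ | ∃ lam ∈ ServiceRegion (Gmat M i : Matrix (Fin k) (Fin n) F), lam j = x}
      (if (j : ℕ) < i then (if n = k then (1 : ℝ) else 1 + ((n : ℝ) - 1) / (k : ℝ))
       else (n : ℝ) / (k : ℝ)) := by
  constructor
  · by_cases hji : (j : ℕ) < i
    · by_cases hnk : n = k
      · rw [if_pos hji, if_pos hnk]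
        exact ach_singleton hkn hsys hji
      · rw [if_pos hji, if_neg hnk]
        exact ach_two hk hkn hMDS hsys hji (by omega)
    · rw [if_neg hji]
      exact ach_frac hk hkn hMDS hsys hji
  · rintro x ⟨lam, hlam, rfl⟩
    exact upper_bound hk hkn hMDS hsys lam hlam
end

section
/- Necessity of the capacity constraints: for every achievable request vector λ ∈ S_i(n,k) and every subset A ⊆ [i], letting B = [i] \ A and C = {i+1,…,k}, it holds that k·(Σ_{j∈A} λ_j + Σ_{j∈C} λ_j) + Σ_{j∈B} λ_j ≤ n + |A|·(k−1). -/
open Matrix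

def iotaMap (k n i : ℕ) : Fin n → Fin (k + n) :=
  fun l => if h : (l : ℕ) < i ∧ i ≤ k then ⟨(l : ℕ), by omega⟩
    else ⟨k + (l : ℕ), by have := l.isLt; omega⟩

lemma Gmat_col {F : Type*} [Field F] {k n : ℕ} (M : Matrix (Fin k) (Fin (k + n)) F)
    {i : ℕ} (hik : i ≤ k) (l : Fin n) : (Gmat M i)ᵀ l = Mᵀ (iotaMap k n i l) := by
  funext r
  simp only [Gmat, iotaMap, transpose_apply, of_apply]
  by_cases h : (l : ℕ) < i
  · simp [h, hik]
  · simp [h]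

lemma col_single {F : Type*} [Field F] {k n : ℕ} {M : Matrix (Fin k) (Fin (k + n)) F}
    (hsys : ∀ j : Fin k, ∀ r : Fin k, M r (Fin.castAdd n j) = if r = j then (1 : F) else 0)
    (j : Fin k) : Mᵀ (Fin.castAdd n j) = (Pi.single j 1 : Fin k → F) := by
  funext r
  simp [transpose_apply, hsys j r, Pi.single_apply]

lemma not_mem_span_aux {F : Type*} [Field F] {k n : ℕ}
    {M : Matrix (Fin k) (Fin (k + n)) F}
    (hsys : ∀ j : Fin k, ∀ r : Fin k, M r (Fin.castAdd n j) = if r = j then (1 : F) else 0)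
    (hMDS : ∀ S : Finset (Fin (k + n)), S.card = k →
      LinearIndependent F (fun l : S => Mᵀ (l : Fin (k + n))))
    {i : ℕ} (hik : i ≤ k) (j : Fin k) (R : Finset (Fin n)) (hcard : R.card < k)
    (hnot : ∀ l ∈ R, iotaMap k n i l ≠ Fin.castAdd n j) :
    (Pi.single j 1 : Fin k → F) ∉ Submodule.span F ((Gmat M i)ᵀ '' (R : Set (Fin n))) := by
  set T : Finset (Fin (k + n)) := R.image (iotaMap k n i) with hT
  have hTc : T.card ≤ R.card := Finset.card_image_le
  have hS0card : (insert (Fin.castAdd n j) T).card ≤ k := by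
    have := Finset.card_insert_le (Fin.castAdd n j) T
    omega
  obtain ⟨S, hsub, hScard⟩ := Finset.exists_superset_card_eq hS0card (by simp)
  have li := hMDS S hScard
  have hxS : Fin.castAdd n j ∈ S := hsub (Finset.mem_insert_self _ _)
  set x : {y // y ∈ S} := ⟨Fin.castAdd n j, hxS⟩ with hx
  set s : Set {y // y ∈ S} := {y | (y : Fin (k + n)) ∈ T} with hs
  have hxs : x ∉ s := by
    simp only [hs, Set.mem_setOf_eq, hx, hT, Finset.mem_image]
    rintro ⟨l, hl, hlj⟩
    exact hnot l hl hlj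
  have key := li.notMem_span_image hxs
  have himg : (fun l : {y // y ∈ S} => Mᵀ (l : Fin (k + n))) '' s
      = Mᵀ '' (T : Set (Fin (k+n))) := by
    ext v
    constructor
    · rintro ⟨⟨u, hu⟩, hus, rfl⟩; exact ⟨u, hus, rfl⟩
    · rintro ⟨u, hu, rfl⟩
      exact ⟨⟨u, hsub (Finset.mem_insert_of_mem hu)⟩, hu, rfl⟩
  rw [himg] at key
  have hcols : (Gmat M i)ᵀ '' (R : Set (Fin n)) = Mᵀ '' (T : Set (Fin (k+n))) := by
    rw [hT, Finset.coe_image]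
    erw [Set.image_image]
    exact Set.image_congr fun l _ => Gmat_col M hik l
  rw [hcols, ← col_single hsys j]
  exact key

lemma recovery_structure {F : Type*} [Field F] {k n : ℕ} (hkn : k ≤ n)
    {M : Matrix (Fin k) (Fin (k + n)) F}
    (hsys : ∀ j : Fin k, ∀ r : Fin k, M r (Fin.castAdd n j) = if r = j then (1 : F) else 0)
    (hMDS : ∀ S : Finset (Fin (k + n)), S.card = k →
      LinearIndependent F (fun l : S => Mᵀ (l : Fin (k + n))))
    {i : ℕ} (hik : i ≤ k) (j : Fin k) (R : Finset (Fin n))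
    (hrec : IsRecoverySet (Gmat M i) j R) :
    ((j : ℕ) < i ∧ R = {(⟨(j : ℕ), by omega⟩ : Fin n)}) ∨ k ≤ R.card := by
  by_cases hcard : k ≤ R.card
  · exact Or.inr hcard
  push_neg at hcard
  left
  by_cases hmem : ∃ l ∈ R, iotaMap k n i l = Fin.castAdd n j
  · obtain ⟨l, hl, hlj⟩ := hmem
    have hval : (iotaMap k n i l : ℕ) = (j : ℕ) := by
      rw [hlj]; rfl
    have hli : (l : ℕ) < i ∧ (l : ℕ) = (j : ℕ) := by
      simp only [iotaMap] at hval
      split_ifs at hval with h <;> simp only [Fin.val_mk] at hval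
      · exact ⟨h.1, hval⟩
      · have := j.isLt; omega
    have hji : (j : ℕ) < i := hli.2 ▸ hli.1
    refine ⟨hji, ?_⟩
    have hleq : l = (⟨(j : ℕ), by omega⟩ : Fin n) := Fin.ext hli.2
    rw [← hleq]
    have hcol : (Gmat M i)ᵀ l = (Pi.single j 1 : Fin k → F) := by
      rw [Gmat_col M hik, hlj, col_single hsys]
    have hspan : (Pi.single j 1 : Fin k → F) ∈
        Submodule.span F ((Gmat M i)ᵀ '' (({l} : Finset (Fin n)) : Set (Fin n))) := by
      apply Submodule.subset_span
      exact ⟨l, by simp, hcol⟩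
    by_contra hne
    have hss : ({l} : Finset (Fin n)) ⊂ R := by
      refine Finset.ssubset_iff_subset_ne.2 ⟨Finset.singleton_subset_iff.2 hl, ?_⟩
      intro h; exact hne h.symm
    exact (hrec.2 {l} hss) hspan
  · push_neg at hmem
    exact absurd hrec.1 (not_mem_span_aux hsys hMDS hik j R hcard hmem)

theorem srr_capacity_constraints_necessary
    {F : Type*} [Field F] [Fintype F] {k n : ℕ} (hk : 2 ≤ k) (hkn : k ≤ n)
    (hq : k + n + 1 ≤ Fintype.card F)
    (M : Matrix (Fin k) (Fin (k + n)) F)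
    (hsys : ∀ j : Fin k, ∀ r : Fin k, M r (Fin.castAdd n j) = if r = j then (1 : F) else 0)
    (hMDS : ∀ S : Finset (Fin (k + n)), S.card = k →
      LinearIndependent F (fun l : S => Mᵀ (l : Fin (k + n))))
    (i : ℕ) (hik : i ≤ k)
    (lam : Fin k → ℝ) (hlam : lam ∈ ServiceRegion (Gmat M i : Matrix (Fin k) (Fin n) F))
    (A : Finset (Fin k)) (hA : ∀ j ∈ A, (j : ℕ) < i) :
    (k : ℝ) * ((∑ j ∈ A, lam j) +
        ∑ j ∈ Finset.univ.filter (fun j : Fin k => i ≤ (j : ℕ)), lam j) +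
      ∑ j ∈ Finset.univ.filter (fun j : Fin k => (j : ℕ) < i ∧ j ∉ A), lam j
      ≤ (n : ℝ) + (A.card : ℝ) * ((k : ℝ) - 1) := by
  classical
  obtain ⟨hpos, w, hw0, hwrec, hwsum, hwcap⟩ := hlam
  set X : Fin k → ℝ := fun j => ∑ R : Finset (Fin n), (R.card : ℝ) * w j R with hX
  -- server load identity
  have hcardsum : ∀ j : Fin k,
      ∑ l : Fin n, ∑ R ∈ Finset.univ.filter (fun R : Finset (Fin n) => l ∈ R), w j R
        = X j := by
    intro j
    calc ∑ l : Fin n, ∑ R ∈ Finset.univ.filter (fun R : Finset (Fin n) => l ∈ R), w j R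
        = ∑ l : Fin n, ∑ R : Finset (Fin n), if l ∈ R then w j R else 0 := by
          simp [Finset.sum_filter]
      _ = ∑ R : Finset (Fin n), ∑ l : Fin n, if l ∈ R then w j R else 0 := Finset.sum_comm
      _ = X j := by
          refine Finset.sum_congr rfl fun R _ => ?_
          rw [Finset.sum_ite_mem, Finset.univ_inter, Finset.sum_const, nsmul_eq_mul]
  have hload : ∑ j : Fin k, X j ≤ (n : ℝ) := by
    calc ∑ j : Fin k, X j
        = ∑ j : Fin k, ∑ l : Fin n,
            ∑ R ∈ Finset.univ.filter (fun R : Finset (Fin n) => l ∈ R), w j R :=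
          Finset.sum_congr rfl fun j _ => (hcardsum j).symm
      _ = ∑ l : Fin n, ∑ j : Fin k,
            ∑ R ∈ Finset.univ.filter (fun R : Finset (Fin n) => l ∈ R), w j R :=
          Finset.sum_comm
      _ ≤ ∑ _l : Fin n, (1 : ℝ) := Finset.sum_le_sum fun l _ => hwcap l
      _ = (n : ℝ) := by simp
  have hk1 : (1 : ℝ) ≤ (k : ℝ) := by exact_mod_cast (by omega : 1 ≤ k)
  -- support fact
  have hsupp : ∀ j (R : Finset (Fin n)), w j R ≠ 0 →
      ((j : ℕ) < i ∧ R = {(⟨(j : ℕ), by have := j.isLt; omega⟩ : Fin n)}) ∨ k ≤ R.card := by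
    intro j R hz
    have hrec : IsRecoverySet (Gmat M i) j R := by
      by_contra h; exact hz (hwrec j R h)
    exact recovery_structure hkn hsys hMDS hik j R hrec
  -- bound for parity objects
  have hCb : ∀ j : Fin k, i ≤ (j : ℕ) → (k : ℝ) * lam j ≤ X j := by
    intro j hj
    rw [← hwsum j, Finset.mul_sum, hX]
    refine Finset.sum_le_sum fun R _ => ?_
    by_cases hz : w j R = 0
    · simp [hz]
    · rcases hsupp j R hz with ⟨hji, _⟩ | hcard
      · omega
      · exact mul_le_mul_of_nonneg_right (by exact_mod_cast hcard) (hw0 j R)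
  -- bound for systematic objects not in A
  have hBb : ∀ j : Fin k, (j : ℕ) < i → lam j ≤ X j := by
    intro j hj
    rw [← hwsum j, hX]
    refine Finset.sum_le_sum fun R _ => ?_
    by_cases hz : w j R = 0
    · simp [hz]
    · have h1 : (1 : ℝ) ≤ (R.card : ℝ) := by
        rcases hsupp j R hz with ⟨_, hRe⟩ | hcard
        · rw [hRe]; simp
        · exact_mod_cast (by omega : 1 ≤ R.card)
      calc w j R = 1 * w j R := (one_mul _).symm
        _ ≤ (R.card : ℝ) * w j R := mul_le_mul_of_nonneg_right h1 (hw0 j R)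
  -- bound for objects in A
  have hAb : ∀ j ∈ A, (k : ℝ) * lam j - ((k : ℝ) - 1) ≤ X j := by
    intro j hjA
    have hji := hA j hjA
    set jn : Fin n := ⟨(j : ℕ), by have := j.isLt; omega⟩ with hjn
    set μ := w j ({jn} : Finset (Fin n)) with hμ
    have hμ0 : 0 ≤ μ := hw0 j _
    have hμ1 : μ ≤ 1 := by
      refine le_trans ?_ (hwcap jn)
      have h1 : μ ≤ ∑ R ∈ Finset.univ.filter (fun R : Finset (Fin n) => jn ∈ R), w j R :=
        Finset.single_le_sum (fun R _ => hw0 j R) (by simp)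
      exact le_trans h1 (Finset.single_le_sum
        (f := fun j' => ∑ R ∈ Finset.univ.filter (fun R : Finset (Fin n) => jn ∈ R), w j' R)
        (fun j' _ => Finset.sum_nonneg fun R _ => hw0 j' R) (Finset.mem_univ j))
    have hsplit : X j
        = (∑ R ∈ Finset.univ.erase ({jn} : Finset (Fin n)), (R.card : ℝ) * w j R) + μ := by
      rw [hX]
      beta_reduce
      rw [← Finset.sum_erase_add Finset.univ _ (Finset.mem_univ ({jn} : Finset (Fin n)))]
      simp [hμ]
    have hsum_erase : ∑ R ∈ Finset.univ.erase ({jn} : Finset (Fin n)), w j R = lam j - μ := by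
      have h := Finset.sum_erase_add Finset.univ (w j)
        (Finset.mem_univ ({jn} : Finset (Fin n)))
      rw [hwsum j] at h
      rw [← hμ] at h
      linarith
    have herase : (k : ℝ) * (lam j - μ)
        ≤ ∑ R ∈ Finset.univ.erase ({jn} : Finset (Fin n)), (R.card : ℝ) * w j R := by
      rw [← hsum_erase, Finset.mul_sum]
      refine Finset.sum_le_sum fun R hR => ?_
      by_cases hz : w j R = 0
      · simp [hz]
      · rcases hsupp j R hz with ⟨_, hRe⟩ | hcard
        · exact absurd hRe (Finset.mem_erase.1 hR).1
        · exact mul_le_mul_of_nonneg_right (by exact_mod_cast hcard) (hw0 j R)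
    nlinarith [mul_nonneg (sub_nonneg.2 hk1) (sub_nonneg.2 hμ1)]
  -- partition of Fin k
  set Bf := Finset.univ.filter (fun j : Fin k => (j : ℕ) < i ∧ j ∉ A) with hBf
  set Cf := Finset.univ.filter (fun j : Fin k => i ≤ (j : ℕ)) with hCf
  have hABu : Finset.univ.filter (fun j : Fin k => (j : ℕ) < i) = A ∪ Bf := by
    ext j
    simp only [hBf, Finset.mem_filter, Finset.mem_univ, true_and, Finset.mem_union]
    constructor
    · intro hj; by_cases h : j ∈ A
      · exact Or.inl h
      · exact Or.inr ⟨hj, h⟩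
    · rintro (h | h)
      · exact hA j h
      · exact h.1
  have hdisj : Disjoint A Bf := by
    rw [Finset.disjoint_left]
    intro j hj hjB
    exact ((Finset.mem_filter.1 hjB).2).2 hj
  have hsplit_univ : ∑ j : Fin k, X j
      = (∑ j ∈ A, X j + ∑ j ∈ Bf, X j) + ∑ j ∈ Cf, X j := by
    rw [← Finset.sum_filter_add_sum_filter_not Finset.univ (fun j : Fin k => (j : ℕ) < i) X,
      hABu, Finset.sum_union hdisj]
    congr 1
    refine Finset.sum_congr ?_ fun _ _ => rfl
    ext j; simp [hCf, not_lt]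
  have hAsum : ∑ j ∈ A, ((k : ℝ) * lam j - ((k : ℝ) - 1)) ≤ ∑ j ∈ A, X j :=
    Finset.sum_le_sum fun j hj => hAb j hj
  have hBsum : ∑ j ∈ Bf, lam j ≤ ∑ j ∈ Bf, X j :=
    Finset.sum_le_sum fun j hj => hBb j (Finset.mem_filter.1 hj).2.1
  have hCsum : ∑ j ∈ Cf, (k : ℝ) * lam j ≤ ∑ j ∈ Cf, X j :=
    Finset.sum_le_sum fun j hj => hCb j (Finset.mem_filter.1 hj).2
  have hAeq : ∑ j ∈ A, ((k : ℝ) * lam j - ((k : ℝ) - 1))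
      = (k : ℝ) * ∑ j ∈ A, lam j - (A.card : ℝ) * ((k : ℝ) - 1) := by
    rw [Finset.sum_sub_distrib, ← Finset.mul_sum, Finset.sum_const, nsmul_eq_mul]
  have hCeq : ∑ j ∈ Cf, (k : ℝ) * lam j = (k : ℝ) * ∑ j ∈ Cf, lam j := by
    rw [Finset.mul_sum]
  rw [hAeq] at hAsum
  rw [hCeq] at hCsum
  have := hload
  rw [hsplit_univ] at this
  linarith
end
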